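/- Let f : M → M′ be a Raney morphism between MT-algebras. If x ∈ M is locally closed, then f(x) is locally closed in M′. -/

import Mathlib

/-- An interior operator on a complete Boolean algebra (Kuratowski axioms). -/
structure MTInterior {M : Type*} [CompleteBooleanAlgebra M] (box : M → M) : Prop where
  map_top : box ⊤ = ⊤
  map_inf : ∀ a b : M, box (a ⊓ b) = box a ⊓ box b
  le_self : ∀ a : M, box a ≤ a
  le_box_box : ∀ a : M, box a ≤ box (box a)

/-- An element is open if it is a fixpoint of the interior operator. -/
def MTOpen {M : Type*} [CompleteBooleanAlgebra M] (box : M → M) (a : M) : Prop :=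
  box a = a

/-- An element is closed if its complement is open. -/
def MTClosed {M : Type*} [CompleteBooleanAlgebra M] (box : M → M) (a : M) : Prop :=
  MTOpen box aᶜ

/-- An element is saturated if it is an infimum of a set of open elements. -/
def MTSat {M : Type*} [CompleteBooleanAlgebra M] (box : M → M) (a : M) : Prop :=
  ∃ S : Set M, (∀ s ∈ S, MTOpen box s) ∧ a = sInf S

/-- An element is locally closed if it is the meet of an open and a closed element. -/
def MTLocClosed {M : Type*} [CompleteBooleanAlgebra M] (box : M → M) (a : M) : Prop :=
  ∃ u c, MTOpen box u ∧ MTClosed box c ∧ a = u ⊓ c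

/-- Membership in the Boolean subalgebra `𝓑𝓢M` generated by the saturated elements. -/
inductive MTBS {M : Type*} [CompleteBooleanAlgebra M] (box : M → M) : M → Prop
  | sat (a : M) : MTSat box a → MTBS box a
  | bot : MTBS box ⊥
  | top : MTBS box ⊤
  | inf (a b : M) : MTBS box a → MTBS box b → MTBS box (a ⊓ b)
  | sup (a b : M) : MTBS box a → MTBS box b → MTBS box (a ⊔ b)
  | compl (a : M) : MTBS box a → MTBS box aᶜ

/-- An MT-algebra is a `T₀`-algebra if every element is a supremum of elements of the
form `s ⊓ c` with `s` saturated and `c` closed. -/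
def MTT0 {M : Type*} [CompleteBooleanAlgebra M] (box : M → M) : Prop :=
  ∀ a : M, a = sSup {b | (∃ s c, MTSat box s ∧ MTClosed box c ∧ b = s ⊓ c) ∧ b ≤ a}

/-- A Raney morphism between MT-algebras. -/
structure MTRaneyHom {M M' : Type*} [CompleteBooleanAlgebra M] [CompleteBooleanAlgebra M']
    (box : M → M) (box' : M' → M') (f : M → M') : Prop where
  sat_map : ∀ a : M, MTSat box a → MTSat box' (f a)
  sat_sup : ∀ a b : M, MTSat box a → MTSat box b → f (a ⊔ b) = f a ⊔ f b
  map_bot : f ⊥ = ⊥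
  sat_sInf : ∀ S : Set M, (∀ s ∈ S, MTSat box s) → f (sInf S) = sInf (f '' S)
  open_map : ∀ a : M, MTOpen box a → MTOpen box' (f a)
  map_top : f ⊤ = ⊤
  open_sSup : ∀ S : Set M, (∀ s ∈ S, MTOpen box s) → f (sSup S) = sSup (f '' S)
  map_inf : ∀ a b : M, f (a ⊓ b) = f a ⊓ f b
  bs_sup : ∀ x y : M, MTBS box x → MTBS box y → f (x ⊔ y) = f x ⊔ f y
  approx : ∀ a : M, f a = sSup (f '' {x | MTBS box x ∧ x ≤ a})

/-- A Raney morphism maps locally closed elements to locally closed elements. -/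
theorem stmt_5 {M M' : Type*} [CompleteBooleanAlgebra M] [CompleteBooleanAlgebra M']
    (box : M → M) (box' : M' → M') (hbox : MTInterior box) (hbox' : MTInterior box')
    (f : M → M') (hf : MTRaneyHom box box' f) :
    ∀ x : M, MTLocClosed box x → MTLocClosed box' (f x) := by
  rintro x ⟨u, c, hu, hc, rfl⟩
  have hsatc : MTSat box cᶜ := ⟨{cᶜ}, by simp only [Set.mem_singleton_iff, forall_eq]; exact hc, by simp⟩
  have hbsc : MTBS box c := by
    have := MTBS.compl _ (MTBS.sat _ hsatc)
    simpa using this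
  have hsup : f c ⊔ f cᶜ = ⊤ := by
    rw [← hf.bs_sup _ _ hbsc (MTBS.sat _ hsatc), sup_compl_eq_top, hf.map_top]
  have hinf : f c ⊓ f cᶜ = ⊥ := by
    rw [← hf.map_inf, inf_compl_eq_bot, hf.map_bot]
  have hcompl : IsCompl (f c) (f cᶜ) :=
    isCompl_iff.mpr ⟨disjoint_iff.mpr hinf, codisjoint_iff.mpr hsup⟩
  refine ⟨f u, f c, hf.open_map _ hu, ?_, hf.map_inf _ _⟩
  unfold MTClosed
  rw [hcompl.compl_eq]
  exact hf.open_map _ hc
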